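/- Similarity function for two overlapping balls (Appendix B, overlapping example): Let r > 0 and v_1, v_2 ∈ ℝ^p with ‖v_1 − v_2‖₂ = 3r; let X̄ := B(v_1;r) ∪ B(v_2;r) and X := B(v_1;2r) ∪ B(v_2;2r) (open balls), with ν the Lebesgue measure restricted to X. Define a(x|x̄) := vol(B(v_1;2r))^{−1} Σ_{i=1}^2 1_{B(v_i;2r)×B(v_i;r)}(x,x̄), p_X̄(x̄) := (2·vol(B(v_1;r)))^{−1} on X̄, w(x,x') := ∫_{X̄} a(x|x̄)·a(x'|x̄)·p_X̄(x̄) dx̄ and w(x) := ∫_X w(x,x') dν(x'). Then w(x) > 0 for every x ∈ X (explicitly, w(x) = 1/(2·vol(B(v_1;2r))) on each exclusive region B(v_i;2r)∖B(v_j;2r) and w(x) = 1/vol(B(v_1;2r)) on B(v_1;2r)∩B(v_2;2r)), and sim(x,x';λ) := w(x,x')/(w(x)w(x')) − λ equals: 2 − λ if x and x' both lie in B(v_1;2r)∖B(v_2;2r) or both lie in B(v_2;2r)∖B(v_1;2r); −λ if one of x, x' lies in B(v_1;2r)∖B(v_2;2r) and the other in B(v_2;2r)∖B(v_1;2r); and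 1 − λ in all remaining cases (i.e. when at least one of x, x' lies in B(v_1;2r)∩B(v_2;2r)). -/

import Mathlib

open MeasureTheory
open scoped ENNReal

lemma aux_integral {p : ℕ} (s t u : Set (EuclideanSpace ℝ (Fin p)))
    (hs : MeasurableSet s) (ht : MeasurableSet t)
    (hsf : volume s ≠ ⊤) (htf : volume t ≠ ⊤)
    (hsu : s ⊆ u) (htu : t ⊆ u) (c d : ℝ) :
    ∫ x in u, (c * s.indicator (fun _ => (1:ℝ)) x + d * t.indicator (fun _ => (1:ℝ)) x) ∂volume
      = c * (volume s).toReal + d * (volume t).toReal := by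
  have his : Integrable (s.indicator (fun _ => (1:ℝ))) (volume.restrict u) := by
    rw [integrable_indicator_iff hs]
    exact integrableOn_const (lt_of_le_of_lt (Measure.restrict_le_self _) hsf.lt_top).ne
  have hit : Integrable (t.indicator (fun _ => (1:ℝ))) (volume.restrict u) := by
    rw [integrable_indicator_iff ht]
    exact integrableOn_const (lt_of_le_of_lt (Measure.restrict_le_self _) htf.lt_top).ne
  rw [integral_add (his.const_mul c) (hit.const_mul d), integral_const_mul, integral_const_mul,
    setIntegral_indicator hs, setIntegral_indicator ht,
    Set.inter_eq_self_of_subset_right hsu, Set.inter_eq_self_of_subset_right htu]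
  simp [Measure.restrict_apply_self, Measure.real]

theorem similarity_two_overlapping_balls
    {p : ℕ} (r : ℝ) (hr : 0 < r)
    (v₁ v₂ : EuclideanSpace ℝ (Fin p)) (hdist : dist v₁ v₂ = 3 * r)
    (lam : ℝ) (hlam : 0 ≤ lam) :
    let B1 : Set (EuclideanSpace ℝ (Fin p)) := Metric.ball v₁ (2 * r)
    let B2 : Set (EuclideanSpace ℝ (Fin p)) := Metric.ball v₂ (2 * r)
    let Xb : Set (EuclideanSpace ℝ (Fin p)) := Metric.ball v₁ r ∪ Metric.ball v₂ r
    let Xs : Set (EuclideanSpace ℝ (Fin p)) := B1 ∪ B2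
    let volB : ℝ := (volume B1).toReal
    let ν : Measure (EuclideanSpace ℝ (Fin p)) := volume.restrict Xs
    let a : EuclideanSpace ℝ (Fin p) → EuclideanSpace ℝ (Fin p) → ℝ := fun x xb =>
      volB⁻¹ * (Set.indicator (B1 ×ˢ Metric.ball v₁ r) (fun _ => (1 : ℝ)) (x, xb)
        + Set.indicator (B2 ×ˢ Metric.ball v₂ r) (fun _ => (1 : ℝ)) (x, xb))
    let pXb : ℝ := (2 * (volume (Metric.ball v₁ r)).toReal)⁻¹
    let w : EuclideanSpace ℝ (Fin p) → EuclideanSpace ℝ (Fin p) → ℝ := fun x x' =>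
      ∫ xb in Xb, a x xb * a x' xb * pXb ∂volume
    let wm : EuclideanSpace ℝ (Fin p) → ℝ := fun x => ∫ x', w x x' ∂ν
    let sim : EuclideanSpace ℝ (Fin p) → EuclideanSpace ℝ (Fin p) → ℝ := fun x x' =>
      w x x' / (wm x * wm x') - lam
    -- positivity and explicit values of the marginal density
    (∀ x ∈ Xs, 0 < wm x) ∧
    (∀ x, x ∈ B1 \ B2 ∨ x ∈ B2 \ B1 → wm x = (2 * volB)⁻¹) ∧
    (∀ x ∈ B1 ∩ B2, wm x = volB⁻¹) ∧
    -- the case analysis for the similarity function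
    (∀ x x', (x ∈ B1 \ B2 ∧ x' ∈ B1 \ B2) ∨ (x ∈ B2 \ B1 ∧ x' ∈ B2 \ B1) →
      sim x x' = 2 - lam) ∧
    (∀ x x', (x ∈ B1 \ B2 ∧ x' ∈ B2 \ B1) ∨ (x ∈ B2 \ B1 ∧ x' ∈ B1 \ B2) →
      sim x x' = -lam) ∧
    (∀ x ∈ Xs, ∀ x' ∈ Xs, (x ∈ B1 ∩ B2 ∨ x' ∈ B1 ∩ B2) →
      sim x x' = 1 - lam) := by
  intro B1 B2 Xb Xs volB ν a pXb w wm sim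
  -- basic volume facts
  have hvr_pos : (0:ℝ) < (volume (Metric.ball v₁ r)).toReal :=
    ENNReal.toReal_pos (Metric.measure_ball_pos volume v₁ hr).ne' measure_ball_lt_top.ne
  have hvB_pos : (0:ℝ) < volB :=
    ENNReal.toReal_pos (Metric.measure_ball_pos volume v₁ (by linarith)).ne' measure_ball_lt_top.ne
  have hvB_ne : volB ≠ 0 := hvB_pos.ne'
  have hvol2 : volume B2 = volume B1 := by
    show volume (Metric.ball v₂ (2*r)) = volume (Metric.ball v₁ (2*r))
    simp [Measure.addHaar_ball_center]
  have hvolr2 : volume (Metric.ball v₂ r) = volume (Metric.ball v₁ r) := by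
    simp [Measure.addHaar_ball_center]
  -- disjointness facts
  have hdisj_small : Disjoint (Metric.ball v₁ r) (Metric.ball v₂ r) :=
    Metric.ball_disjoint_ball (by rw [hdist]; linarith)
  have hd12 : Disjoint (Metric.ball v₁ r) B2 :=
    Metric.ball_disjoint_ball (by rw [hdist]; linarith)
  have hd21 : Disjoint (Metric.ball v₂ r) B1 :=
    Metric.ball_disjoint_ball (by rw [dist_comm, hdist]; linarith)
  have hsub1 : Metric.ball v₁ r ⊆ Xb := Set.subset_union_left
  have hsub2 : Metric.ball v₂ r ⊆ Xb := Set.subset_union_right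
  have hB1Xs : B1 ⊆ Xs := Set.subset_union_left
  have hB2Xs : B2 ⊆ Xs := Set.subset_union_right
  set i1 : EuclideanSpace ℝ (Fin p) → ℝ := B1.indicator (fun _ => (1:ℝ)) with hi1
  set i2 : EuclideanSpace ℝ (Fin p) → ℝ := B2.indicator (fun _ => (1:ℝ)) with hi2
  -- pointwise identity for the integrand of w
  have hprod : ∀ (S T : Set (EuclideanSpace ℝ (Fin p))) (y z : EuclideanSpace ℝ (Fin p)),
      (S ×ˢ T).indicator (fun _ => (1:ℝ)) (y, z)
        = S.indicator (fun _ => (1:ℝ)) y * T.indicator (fun _ => (1:ℝ)) z := by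
    intro S T y z
    by_cases hy : y ∈ S <;> by_cases hz : z ∈ T <;>
      simp [Set.indicator_apply, Set.mem_prod, hy, hz]
  have key : ∀ x x' xb, a x xb * a x' xb * pXb =
      (volB⁻¹ * volB⁻¹ * pXb * (i1 x * i1 x')) * (Metric.ball v₁ r).indicator (fun _ => (1:ℝ)) xb
      + (volB⁻¹ * volB⁻¹ * pXb * (i2 x * i2 x')) * (Metric.ball v₂ r).indicator (fun _ => (1:ℝ)) xb := by
    intro x x' xb
    show volB⁻¹ * ((B1 ×ˢ Metric.ball v₁ r).indicator (fun _ => (1:ℝ)) (x, xb)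
        + (B2 ×ˢ Metric.ball v₂ r).indicator (fun _ => (1:ℝ)) (x, xb))
      * (volB⁻¹ * ((B1 ×ˢ Metric.ball v₁ r).indicator (fun _ => (1:ℝ)) (x', xb)
        + (B2 ×ˢ Metric.ball v₂ r).indicator (fun _ => (1:ℝ)) (x', xb))) * pXb = _
    rw [hprod, hprod, hprod, hprod]
    by_cases h1 : xb ∈ Metric.ball v₁ r
    · have h2 : xb ∉ Metric.ball v₂ r := fun h => (hdisj_small.ne_of_mem h1 h) rfl
      rw [Set.indicator_of_mem h1, Set.indicator_of_notMem h2]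
      ring
    · by_cases h2 : xb ∈ Metric.ball v₂ r
      · rw [Set.indicator_of_mem h2, Set.indicator_of_notMem h1]
        ring
      · rw [Set.indicator_of_notMem h1, Set.indicator_of_notMem h2]
        ring
  -- value of w
  have hw : ∀ x x', w x x' = (2 * (volB * volB))⁻¹ * (i1 x * i1 x' + i2 x * i2 x') := by
    intro x x'
    show (∫ xb in Xb, a x xb * a x' xb * pXb ∂volume) = _
    rw [show (fun xb => a x xb * a x' xb * pXb) = fun xb =>
        (volB⁻¹ * volB⁻¹ * pXb * (i1 x * i1 x')) * (Metric.ball v₁ r).indicator (fun _ => (1:ℝ)) xb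
        + (volB⁻¹ * volB⁻¹ * pXb * (i2 x * i2 x')) * (Metric.ball v₂ r).indicator (fun _ => (1:ℝ)) xb
      from funext (key x x')]
    rw [aux_integral _ _ _ measurableSet_ball measurableSet_ball
      measure_ball_lt_top.ne measure_ball_lt_top.ne hsub1 hsub2]
    rw [hvolr2]
    have : pXb = (2 * (volume (Metric.ball v₁ r)).toReal)⁻¹ := rfl
    rw [this]
    field_simp
  -- value of wm
  have hwm : ∀ x, wm x = (2 * volB)⁻¹ * (i1 x + i2 x) := by
    intro x
    show (∫ x', w x x' ∂ν) = _
    have : (fun x' => w x x') = fun x' =>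
        ((2 * (volB * volB))⁻¹ * i1 x) * i1 x' + ((2 * (volB * volB))⁻¹ * i2 x) * i2 x' := by
      funext x'
      rw [hw]
      ring
    rw [this]
    rw [show ν = volume.restrict Xs from rfl]
    rw [aux_integral _ _ _ measurableSet_ball measurableSet_ball
      measure_ball_lt_top.ne measure_ball_lt_top.ne hB1Xs hB2Xs]
    rw [hvol2]
    field_simp
    ring
  -- indicator values
  have hi1_mem : ∀ x, x ∈ B1 → i1 x = 1 := fun x hx => by simp [i1, hx]
  have hi1_not : ∀ x, x ∉ B1 → i1 x = 0 := fun x hx => by simp [i1, hx]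
  have hi2_mem : ∀ x, x ∈ B2 → i2 x = 1 := fun x hx => by simp [i2, hx]
  have hi2_not : ∀ x, x ∉ B2 → i2 x = 0 := fun x hx => by simp [i2, hx]
  have hwm_ex : ∀ x, x ∈ B1 \ B2 ∨ x ∈ B2 \ B1 → wm x = (2 * volB)⁻¹ := by
    rintro x (⟨h1, h2⟩ | ⟨h1, h2⟩) <;>
      rw [hwm] <;>
      simp [hi1_mem, hi2_mem, hi1_not, hi2_not, h1, h2]
  have hwm_in : ∀ x ∈ B1 ∩ B2, wm x = volB⁻¹ := by
    rintro x ⟨h1, h2⟩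
    rw [hwm, hi1_mem x h1, hi2_mem x h2]
    field_simp
    norm_num
  refine ⟨?_, hwm_ex, hwm_in, ?_, ?_, ?_⟩
  · -- positivity
    intro x hx
    rw [hwm]
    have hpos : 0 < i1 x + i2 x := by
      rcases hx with hx | hx
      · have := Set.indicator_nonneg (fun y _ => (zero_le_one : (0:ℝ) ≤ 1)) x (s := B2)
        rw [hi1_mem x hx]; linarith [Set.indicator_nonneg (s := B2) (f := fun _ => (1:ℝ))
          (fun y _ => zero_le_one) x]
      · rw [hi2_mem x hx]; linarith [Set.indicator_nonneg (s := B1) (f := fun _ => (1:ℝ))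
          (fun y _ => zero_le_one) x]
    positivity
  · -- both exclusive same
    rintro x x' (⟨hx, hx'⟩ | ⟨hx, hx'⟩) <;>
    · show w x x' / (wm x * wm x') - lam = 2 - lam
      rw [hw, hwm_ex x (by tauto), hwm_ex x' (by tauto)]
      first
      | (rw [hi1_mem x hx.1, hi1_mem x' hx'.1, hi2_not x hx.2, hi2_not x' hx'.2]; field_simp; ring)
      | (rw [hi2_mem x hx.1, hi2_mem x' hx'.1, hi1_not x hx.2, hi1_not x' hx'.2]; field_simp; ring)
  · -- cross exclusive
    rintro x x' (⟨hx, hx'⟩ | ⟨hx, hx'⟩) <;>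
    · show w x x' / (wm x * wm x') - lam = -lam
      rw [hw, hwm_ex x (by tauto), hwm_ex x' (by tauto)]
      first
      | (rw [hi1_mem x hx.1, hi2_mem x' hx'.1, hi2_not x hx.2, hi1_not x' hx'.2]; field_simp; ring)
      | (rw [hi2_mem x hx.1, hi1_mem x' hx'.1, hi1_not x hx.2, hi2_not x' hx'.2]; field_simp; ring)
  · -- remaining cases
    intro x hx x' hx' hcase
    show w x x' / (wm x * wm x') - lam = 1 - lam
    have hnn : ∀ y, 0 ≤ i1 y ∧ 0 ≤ i2 y := fun y =>
      ⟨Set.indicator_nonneg (fun _ _ => zero_le_one) y,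
       Set.indicator_nonneg (fun _ _ => zero_le_one) y⟩
    have hpos : ∀ y, y ∈ Xs → 0 < i1 y + i2 y := by
      rintro y (hy | hy)
      · rw [hi1_mem y hy]; linarith [(hnn y).2]
      · rw [hi2_mem y hy]; linarith [(hnn y).1]
    rcases hcase with ⟨h1, h2⟩ | ⟨h1, h2⟩
    · -- x in both balls
      have hx1 : i1 x = 1 := hi1_mem x h1
      have hx2 : i2 x = 1 := hi2_mem x h2
      have hs' : i1 x' + i2 x' ≠ 0 := (hpos x' hx').ne'
      rw [hw, hwm x, hwm x', hx1, hx2]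
      have heq : ((2 * (volB * volB))⁻¹ * (1 * i1 x' + 1 * i2 x')) /
          ((2 * volB)⁻¹ * (1 + 1) * ((2 * volB)⁻¹ * (i1 x' + i2 x'))) = 1 := by
        field_simp
        ring
      rw [heq]
    · -- x' in both balls
      have hx1 : i1 x' = 1 := hi1_mem x' h1
      have hx2 : i2 x' = 1 := hi2_mem x' h2
      have hs' : i1 x + i2 x ≠ 0 := (hpos x hx).ne'
      rw [hw, hwm x, hwm x', hx1, hx2]
      have heq : ((2 * (volB * volB))⁻¹ * (i1 x * 1 + i2 x * 1)) /
          ((2 * volB)⁻¹ * (i1 x + i2 x) * ((2 * volB)⁻¹ * (1 + 1))) = 1 := by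
        field_simp
        ring
      rw [heq]
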